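/- There exists an optimal computer, i.e., a computer U such that for each computer C there exists d ∈ ℕ with the property that for every p ∈ Dom C there exists a finite binary string q with U(q) = C(p) and |q| ≤ |p| + d. -/

import Mathlib

open Filter Topology

/-- A set of finite binary strings is prefix-free if no string in it is a
proper prefix of another string in it. -/
def PrefixFree (S : Set (List Bool)) : Prop :=
  ∀ p ∈ S, ∀ q ∈ S, p <+: q → p = q

/-- A computer: a partial recursive function from finite binary strings to
finite binary strings whose domain is a nonempty prefix-free set. -/
structure Computer where
  f : List Bool →. List Bool
  partrec : Partrec f
  dom_nonempty : f.Dom.Nonempty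
  dom_prefixFree : PrefixFree f.Dom

/-- A computer `U` is optimal if for each computer `C` there is `d ∈ ℕ` such
that every `p ∈ Dom C` admits `q` with `U(q) = C(p)` and `|q| ≤ |p| + d`. -/
def Optimal (U : Computer) : Prop :=
  ∀ C : Computer, ∃ d : ℕ, ∀ p ∈ C.f.Dom,
    ∃ q : List Bool, U.f q = C.f p ∧ q.length ≤ p.length + d

/-- `H_C(s)`: the length of a shortest program for `C` printing `s`. -/
noncomputable def complexity (C : Computer) (s : List Bool) : ℕ :=
  sInf {n | ∃ p : List Bool, s ∈ C.f p ∧ p.length = n}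

/-- The `i`-th bit (for `i = 0, 1, 2, …`) of the base-two expansion of
`α - ⌊α⌋` with infinitely many zeros. -/
noncomputable def bitOf (α : ℝ) (i : ℕ) : Bool :=
  decide (⌊(α - ⌊α⌋) * 2 ^ (i + 1)⌋ % 2 = 1)

/-- `α↾n`: the first `n` bits of the base-two expansion of `α - ⌊α⌋`
with infinitely many zeros. -/
noncomputable def firstBits (α : ℝ) (n : ℕ) : List Bool :=
  (List.range n).map (bitOf α)

/-- A real `α` is computable if some total recursive `f : ℕ⁺ → ℚ` satisfies
`|α - f n| < 1/n` for all `n ≥ 1`. -/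
def ComputableReal (α : ℝ) : Prop :=
  ∃ f : ℕ → ℚ, Computable f ∧ ∀ n : ℕ, 0 < n → |α - (f n : ℝ)| < 1 / n

/-- `α` is weakly Chaitin `T`-random (w.r.t. the computer `U`). -/
def WeaklyChaitinTRandom (U : Computer) (T α : ℝ) : Prop :=
  ∃ c : ℕ, ∀ n : ℕ, 0 < n → T * n - c ≤ (complexity U (firstBits α n) : ℝ)

/-- `α` is Chaitin `T`-random (w.r.t. the computer `U`). -/
def ChaitinTRandom (U : Computer) (T α : ℝ) : Prop :=
  Tendsto (fun n : ℕ => (complexity U (firstBits α n) : ℝ) - T * n) atTop atTop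

/-- `α` is `T`-compressible (w.r.t. the computer `U`): `H(α↾n) ≤ Tn + o(n)`. -/
def TCompressible (U : Computer) (T α : ℝ) : Prop :=
  ∃ g : ℕ → ℝ, Tendsto (fun n : ℕ => g n / n) atTop (nhds 0) ∧
    ∀ n : ℕ, 0 < n → (complexity U (firstBits α n) : ℝ) ≤ T * n + g n

/-- The Boltzmann factor `2^(-|p|/T)` of a program `p`. -/
noncomputable def boltzmann (T : ℝ) (p : List Bool) : ℝ :=
  (2 : ℝ) ^ (-(p.length : ℝ) / T)

/-- Partition function `Z_C(T) = Σ_{p ∈ Dom C} 2^(-|p|/T)`. -/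
noncomputable def Zfun (C : Computer) (T : ℝ) : ℝ :=
  ∑' p : C.f.Dom, boltzmann T p.1

/-- Free energy `F_C(T) = -T log₂ Z_C(T)`. -/
noncomputable def Ffun (C : Computer) (T : ℝ) : ℝ :=
  -T * Real.logb 2 (Zfun C T)

/-- Energy `E_C(T) = Z_C(T)⁻¹ Σ_{p ∈ Dom C} |p| 2^(-|p|/T)`. -/
noncomputable def Efun (C : Computer) (T : ℝ) : ℝ :=
  (Zfun C T)⁻¹ * ∑' p : C.f.Dom, (p.1.length : ℝ) * boltzmann T p.1

/-- Statistical mechanical entropy `S_C(T) = (E_C(T) - F_C(T))/T`. -/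
noncomputable def Sfun (C : Computer) (T : ℝ) : ℝ :=
  (Efun C T - Ffun C T) / T

/-- `𝒵(V)`: the set of `T ∈ (0,1)` with `Z_V(T)` computable. -/
def setZ (V : Computer) : Set ℝ := {T | T ∈ Set.Ioo 0 1 ∧ ComputableReal (Zfun V T)}

/-- `ℱ(V)`: the set of `T ∈ (0,1)` with `F_V(T)` computable. -/
def setF (V : Computer) : Set ℝ := {T | T ∈ Set.Ioo 0 1 ∧ ComputableReal (Ffun V T)}

/-- `ℰ(V)`: the set of `T ∈ (0,1)` with `E_V(T)` computable. -/
def setE (V : Computer) : Set ℝ := {T | T ∈ Set.Ioo 0 1 ∧ ComputableReal (Efun V T)}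

/-- `𝒮(V)`: the set of `T ∈ (0,1)` with `S_V(T)` computable. -/
def setS (V : Computer) : Set ℝ := {T | T ∈ Set.Ioo 0 1 ∧ ComputableReal (Sfun V T)}

/-- `FP_w` (w.r.t. the optimal computer `U` fixing `H`): the set of `T ∈ (0,1)`
that are weakly Chaitin `T`-random and `T`-compressible. -/
def FPw (U : Computer) : Set ℝ :=
  {T | T ∈ Set.Ioo 0 1 ∧ WeaklyChaitinTRandom U T T ∧ TCompressible U T T}

/-- `FP` (w.r.t. the optimal computer `U` fixing `H`): the set of `T ∈ (0,1)`
that are Chaitin `T`-random and `T`-compressible. -/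
def FP (U : Computer) : Set ℝ :=
  {T | T ∈ Set.Ioo 0 1 ∧ ChaitinTRandom U T T ∧ TCompressible U T T}

/-- A computer is physically reasonable if its domain contains two strings of
different lengths. -/
def PhysicallyReasonable (C : Computer) : Prop :=
  ∃ p ∈ C.f.Dom, ∃ q ∈ C.f.Dom, p.length ≠ q.length

/-- A computable measure machine: `Z_C(1)` is a computable real. -/
def ComputableMeasureMachine (C : Computer) : Prop :=
  ComputableReal (Zfun C 1)

/-- `D` is the composition `C₀ ⊘ C₁ ⊘ ⋯ ⊘ C_{N-1}`: its domain consists of the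
concatenations `p₀p₁⋯p_{N-1}` with each `pᵢ ∈ Dom Cᵢ`, and on such a
concatenation it returns `C₀(p₀)`. -/
def IsComposition {N : ℕ} (C : Fin N → Computer) (hN : 0 < N) (D : Computer) : Prop :=
  (∀ l, l ∈ D.f.Dom ↔
      ∃ ps : Fin N → List Bool, (∀ i, ps i ∈ (C i).f.Dom) ∧ l = (List.ofFn ps).flatten) ∧
  (∀ ps : Fin N → List Bool, (∀ i, ps i ∈ (C i).f.Dom) →
      D.f ((List.ofFn ps).flatten) = (C ⟨0, hN⟩).f (ps ⟨0, hN⟩))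

/-- A sequence of computers is recursive if a single partial recursive function
uniformly computes all of them. -/
def RecursiveSeq (V : ℕ → Computer) : Prop :=
  ∃ F : ℕ × List Bool →. List Bool, Partrec F ∧ ∀ n p, (V n).f p = F (n, p)
namespace OptComp

open Nat.Partrec (Code)
open Nat.Partrec.Code
open Encodable (encode decode decode₂)

/-! ### bool-valued prefix test -/

def preB (p q : List Bool) : Bool := decide (p = q.take p.length)

lemma preB_iff {p q : List Bool} : preB p q = true ↔ p <+: q := by
  simp [preB, ← List.prefix_iff_eq_take]

def compB (p q : List Bool) : Bool := preB p q || preB q p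

lemma compB_iff {p q : List Bool} : compB p q = true ↔ (p <+: q ∨ q <+: p) := by
  simp [compB, preB_iff]

/-- comparability of decoded strings -/
def ncomp (n m : ℕ) : Bool :=
  (((decode₂ (List Bool) n).bind fun p =>
    (decode₂ (List Bool) m).map fun q => compB p q)).getD false

lemma ncomp_eq {n m : ℕ} {p q : List Bool} (hn : decode₂ (List Bool) n = some p)
    (hm : decode₂ (List Bool) m = some q) : ncomp n m = compB p q := by
  simp [ncomp, hn, hm]

/-! ### the "kept" (prefix-free) sublist of an enumeration -/

def ok (acc : List ℕ) (n : ℕ) : Bool :=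
  (decode₂ (List Bool) n).isSome && acc.foldl (fun b m => b && !(ncomp n m)) true

lemma foldl_and (f : ℕ → Bool) : ∀ (l : List ℕ) (b : Bool),
    l.foldl (fun b m => b && f m) b = (b && l.all f)
  | [], b => by simp
  | a :: l, b => by simp [foldl_and f l, Bool.and_assoc]

lemma ok_iff {acc n} : ok acc n = true ↔
    (∃ p, decode₂ (List Bool) n = some p) ∧ ∀ m ∈ acc, ncomp n m = false := by
  simp [ok, foldl_and, Option.isSome_iff_exists, List.all_eq_true]

def step (acc : List ℕ) (n : ℕ) : List ℕ := cond (ok acc n) (acc ++ [n]) acc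

def kept (l : List ℕ) : List ℕ := l.foldl step []

lemma prefix_foldl_step : ∀ (l : List ℕ) (acc : List ℕ), acc <+: l.foldl step acc
  | [], acc => List.prefix_refl _
  | a :: l, acc => by
      refine List.IsPrefix.trans ?_ (prefix_foldl_step l (step acc a))
      unfold step; cases ok acc a <;> simp

/-- invariant: kept lists decode to prefix-free families -/
def Inv (acc : List ℕ) : Prop :=
  ∀ a ∈ acc, ∀ b ∈ acc, ∀ p q, decode₂ (List Bool) a = some p →
    decode₂ (List Bool) b = some q → p <+: q → p = q

lemma inv_step {acc n} (h : Inv acc) : Inv (step acc n) := by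
  unfold step
  cases hok : ok acc n
  · simpa using h
  · simp only [cond_true]
    rcases ok_iff.1 hok with ⟨⟨p₀, hp₀⟩, hall⟩
    intro a ha b hb p q hp hq hpq
    simp only [List.mem_append, List.mem_singleton] at ha hb
    rcases ha with ha | rfl <;> rcases hb with hb | rfl
    · exact h a ha b hb p q hp hq hpq
    · have h2 := hall a ha
      rw [ncomp_eq hq hp] at h2
      have h3 : compB q p = true := compB_iff.2 (Or.inr hpq)
      simp [h3] at h2
    · have h2 := hall b hb
      rw [ncomp_eq hp hq] at h2
      have h3 : compB p q = true := compB_iff.2 (Or.inl hpq)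
      simp [h3] at h2
    · rw [hp] at hq; exact Option.some.inj hq

lemma inv_foldl : ∀ (l : List ℕ) (acc : List ℕ), Inv acc → Inv (l.foldl step acc)
  | [], _, h => h
  | a :: l, acc, h => inv_foldl l (step acc a) (inv_step h)

lemma inv_kept (l : List ℕ) : Inv (kept l) :=
  inv_foldl l [] (by intro a ha; simp at ha)

/-- completeness: if all enumerated strings decode into a prefix-free set `D`,
then everything is kept. -/
lemma mem_foldl_step {D : Set (List Bool)} (hD : PrefixFree D) :
    ∀ (l acc : List ℕ),
      (∀ m ∈ acc, ∃ p, decode₂ (List Bool) m = some p ∧ p ∈ D) →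
      (∀ m ∈ l, ∃ p, decode₂ (List Bool) m = some p ∧ p ∈ D) →
      ∀ n, (n ∈ acc ∨ n ∈ l) → n ∈ l.foldl step acc := by
  intro l
  induction l with
  | nil => intro acc _ _ n hn; simpa using hn
  | cons a l ih =>
    intro acc hacc hl n hn
    have hagood := hl a (by simp)
    have hstepgood : ∀ m ∈ step acc a, ∃ p, decode₂ (List Bool) m = some p ∧ p ∈ D := by
      intro m hm
      unfold step at hm
      cases hok : ok acc a <;> simp [hok] at hm
      · exact hacc m hm
      · rcases hm with hm | rfl
        · exact hacc m hm
        · exact hagood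
    have hmem_a : a ∈ step acc a := by
      unfold step
      cases hok : ok acc a
      · -- a was rejected: some m ∈ acc is comparable, hence a = m ∈ acc
        simp only [cond_false]
        rcases hagood with ⟨p, hp, hpD⟩
        have : ¬ ((∃ p, decode₂ (List Bool) a = some p) ∧
            ∀ m ∈ acc, ncomp a m = false) := by
          intro hc; rw [← ok_iff] at hc; simp [hc] at hok
        rcases not_and_or.1 this with h1 | h1
        · exact absurd ⟨p, hp⟩ h1
        · push_neg at h1
          rcases h1 with ⟨m, hm, hne⟩
          rcases hacc m hm with ⟨q, hq, hqD⟩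
          have hcmp : compB p q = true := by
            have hnc := ncomp_eq hp hq
            rw [hnc] at hne
            simpa using hne
          rcases compB_iff.1 hcmp with hpre | hpre
          · have : p = q := hD p hpD q hqD hpre
            subst this
            have : a = m := by
              rw [Encodable.decode₂_eq_some] at hp hq; omega
            subst this; exact hm
          · have : q = p := hD q hqD p hpD hpre
            subst this
            have : a = m := by
              rw [Encodable.decode₂_eq_some] at hp hq; omega
            subst this; exact hm
      · simp
    have := ih (step acc a) hstepgood (fun m hm => hl m (by simp [hm]))
    rcases hn with hn | hn
    · exact this n (Or.inl (by
        unfold step; cases ok acc a <;> simp [hn]))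
    · rcases List.mem_cons.1 hn with rfl | hn
      · exact this n (Or.inl hmem_a)
      · exact this n (Or.inr hn)

/-! ### enumeration of the halting set in a stable order -/

def newAt (c : Code) (t : ℕ) : List ℕ :=
  (List.range (t + 1)).flatMap fun n =>
    cond ((evaln (t + 1) c n).isSome && !(evaln t c n).isSome) [n] []

lemma mem_newAt {c t n} : n ∈ newAt c t ↔
    (evaln (t + 1) c n).isSome ∧ evaln t c n = none := by
  constructor
  · intro h
    simp only [newAt, List.mem_flatMap, List.mem_range] at h
    rcases h with ⟨m, _, hm⟩
    rcases Bool.eq_false_or_eq_true ((evaln (t+1) c m).isSome && (evaln t c m).isNone)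
      with hb | hb <;> simp [hb] at hm
    subst hm
    simpa [Option.not_isSome_iff_eq_none] using hb
  · intro ⟨h1, h2⟩
    have hn : n < t + 1 := by
      rcases Option.isSome_iff_exists.1 h1 with ⟨x, hx⟩
      exact evaln_bound hx
    simp only [newAt, List.mem_flatMap, List.mem_range]
    exact ⟨n, hn, by simp [h1, h2]⟩

def En (c : Code) (s : ℕ) : List ℕ := (List.range s).flatMap (newAt c)

lemma evaln_zero' (c : Code) (n : ℕ) : evaln 0 c n = none := by simp [evaln]

lemma mem_En {c s n} : n ∈ En c s ↔ (evaln s c n).isSome := by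
  constructor
  · intro h
    simp only [En, List.mem_flatMap, List.mem_range] at h
    rcases h with ⟨t, ht, hm⟩
    rcases mem_newAt.1 hm with ⟨h1, _⟩
    rcases Option.isSome_iff_exists.1 h1 with ⟨x, hx⟩
    exact Option.isSome_iff_exists.2 ⟨x, evaln_mono ht hx⟩
  · intro h
    rcases Option.isSome_iff_exists.1 h with ⟨x, hx⟩
    have hs : 0 < s := lt_of_le_of_lt (Nat.zero_le n) (evaln_bound hx)
    have hpred : ∃ t, (evaln (t + 1) c n).isSome := by
      refine ⟨s - 1, ?_⟩
      have : s - 1 + 1 = s := Nat.succ_pred_eq_of_pos hs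
      rw [this]; exact h
    let t := Nat.find hpred
    have ht1 : (evaln (t + 1) c n).isSome := Nat.find_spec hpred
    have ht0 : evaln t c n = none := by
      rcases Nat.eq_zero_or_pos t with h0 | h0
      · rw [h0]; exact evaln_zero' c n
      · have := Nat.find_min hpred (m := t - 1) (by omega)
        have heq : t - 1 + 1 = t := Nat.succ_pred_eq_of_pos h0
        rw [heq] at this
        simpa [Option.isNone_iff_eq_none] using this
    have hts : t < s := by
      by_contra hc
      push_neg at hc
      have : (evaln t c n).isSome :=
        Option.isSome_iff_exists.2 ⟨x, evaln_mono hc hx⟩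
      rw [ht0] at this; simp at this
    simp only [En, List.mem_flatMap, List.mem_range]
    exact ⟨t, hts, mem_newAt.2 ⟨ht1, ht0⟩⟩

lemma En_prefix {c} : ∀ {s s'}, s ≤ s' → En c s <+: En c s' := by
  intro s s' h
  rcases Nat.exists_eq_add_of_le h with ⟨k, rfl⟩
  unfold En
  rw [List.range_add, List.flatMap_append]
  exact List.prefix_append _ _

def keptSet (c : Code) (s : ℕ) : List ℕ := kept (En c s)

lemma keptSet_prefix {c s s'} (h : s ≤ s') : keptSet c s <+: keptSet c s' := by
  rcases En_prefix (c := c) h with ⟨r, hr⟩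
  unfold keptSet kept
  rw [← hr, List.foldl_append]
  exact prefix_foldl_step _ _

lemma keptSet_subset_En {c s} : ∀ n ∈ keptSet c s, n ∈ En c s := by
  have : ∀ (l acc : List ℕ), ∀ n ∈ l.foldl step acc, n ∈ acc ∨ n ∈ l := by
    intro l
    induction l with
    | nil => intro acc n h; exact Or.inl h
    | cons a l ih =>
      intro acc n h
      rcases ih (step acc a) n h with h1 | h1
      · unfold step at h1
        cases hok : ok acc a <;> simp [hok] at h1
        · exact Or.inl h1
        · rcases h1 with h1 | rfl
          · exact Or.inl h1
          · exact Or.inr (by simp)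
      · exact Or.inr (by simp [h1])
  intro n hn
  rcases this (En c s) [] n hn with h | h
  · simp at h
  · exact h

/-! ### the prefix-free machine of a code -/

def guts (c : Code) (p : List Bool) (s : ℕ) : Option (List Bool) :=
  cond (decide (encode p ∈ keptSet c s))
    ((evaln s c (encode p)).bind fun r => decode₂ (List Bool) r) none

lemma mem_guts_iff {c p s a} : a ∈ guts c p s ↔
    encode p ∈ keptSet c s ∧ ∃ r, evaln s c (encode p) = some r ∧
      decode₂ (List Bool) r = some a := by
  unfold guts
  by_cases h : encode p ∈ keptSet c s <;>
    simp [h, Option.bind_eq_some_iff, Option.mem_def]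

lemma guts_mono {c p} {a : List Bool} {s s' : ℕ} (h : s ≤ s')
    (ha : a ∈ guts c p s) : a ∈ guts c p s' := by
  rcases mem_guts_iff.1 ha with ⟨hk, r, hr, hd⟩
  refine mem_guts_iff.2 ⟨(keptSet_prefix h).subset hk, r, ?_, hd⟩
  exact evaln_mono h hr

def PF (c : Code) : List Bool →. List Bool := fun p => Nat.rfindOpt (guts c p)

lemma mem_PF {c p a} : a ∈ PF c p ↔ ∃ s, a ∈ guts c p s :=
  Nat.rfindOpt_mono fun {_ _ _} h => guts_mono h

lemma PF_dom_prefixFree (c : Code) : PrefixFree (PF c).Dom := by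
  intro p hp q hq hpq
  rcases Part.dom_iff_mem.1 hp with ⟨a, ha⟩
  rcases Part.dom_iff_mem.1 hq with ⟨b, hb⟩
  rcases mem_PF.1 ha with ⟨s₁, h₁⟩
  rcases mem_PF.1 hb with ⟨s₂, h₂⟩
  have h₁' := mem_guts_iff.1 (guts_mono (le_max_left s₁ s₂) h₁)
  have h₂' := mem_guts_iff.1 (guts_mono (le_max_right s₁ s₂) h₂)
  exact inv_kept (En c (max s₁ s₂)) _ h₁'.1 _ h₂'.1 p q
    (Encodable.decode₂_encode p) (Encodable.decode₂_encode q) hpq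

/-! ### PF computes `f` when `f`'s domain is prefix-free -/

lemma exists_good_code {f : List Bool →. List Bool} (hf : Partrec f) : ∃ c : Code,
    ∀ n, eval c n = ((decode₂ (List Bool) n : Part (List Bool)).bind
      fun p => (f p).map encode) := by
  have h1 : Partrec fun n : ℕ => (decode₂ (List Bool) n : Part (List Bool)).bind f :=
    Partrec.bind (Computable.ofOption (Primrec.decode₂.to_comp))
      (hf.comp Computable.snd)
  have h2 : Nat.Partrec fun n =>
      ((decode₂ (List Bool) n : Part (List Bool)).bind fun p => (f p).map encode) := by
    have := h1  -- Partrec for ℕ →. List Bool unfolds to Nat.Partrec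
    unfold Partrec at this
    refine this.of_eq fun n => ?_
    apply Part.ext
    intro a
    simp [Part.mem_bind_iff, Part.mem_map_iff, Encodable.decode_nat]
    constructor
    · rintro ⟨x, hx, rfl⟩
      rcases Part.mem_bind_iff.1 hx with ⟨p, hp, hx⟩
      exact ⟨p, by simpa using hp, x, hx, rfl⟩
    · rintro ⟨p, hp, y, hy, rfl⟩
      exact ⟨y, Part.mem_bind_iff.2 ⟨p, by simp [hp], hy⟩, rfl⟩
  rcases Nat.Partrec.Code.exists_code.1 h2 with ⟨c, hc⟩
  exact ⟨c, fun n => by rw [hc]⟩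

lemma PF_eq {f : List Bool →. List Bool} (hD : PrefixFree f.Dom) {c : Code}
    (hc : ∀ n, eval c n = ((decode₂ (List Bool) n : Part (List Bool)).bind
      fun p => (f p).map encode)) :
    ∀ p ∈ f.Dom, PF c p = f p := by
  intro p hp
  rcases Part.dom_iff_mem.1 hp with ⟨y, hy⟩
  have heval : encode y ∈ eval c (encode p) := by
    rw [hc]
    simp only [Part.mem_bind_iff, Part.mem_map_iff]
    exact ⟨p, by simp [Encodable.decode₂_encode], y, hy, rfl⟩
  rcases evaln_complete.1 heval with ⟨k, hk⟩
  have hEn : encode p ∈ En c k :=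
    mem_En.2 (Option.isSome_iff_exists.2 ⟨_, hk⟩)
  have hgood : ∀ m ∈ En c k, ∃ q, decode₂ (List Bool) m = some q ∧ q ∈ f.Dom := by
    intro m hm
    rcases Option.isSome_iff_exists.1 (mem_En.1 hm) with ⟨x, hx⟩
    have : x ∈ eval c m := evaln_sound hx
    rw [hc] at this
    simp only [Part.mem_bind_iff, Part.mem_map_iff] at this
    rcases this with ⟨q, hq, z, hz, _⟩
    exact ⟨q, by simpa using hq, Part.dom_iff_mem.2 ⟨z, hz⟩⟩
  have hkept : encode p ∈ keptSet c k :=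
    mem_foldl_step hD (En c k) [] (by intro m hm; simp at hm) hgood _ (Or.inr hEn)
  apply Part.ext
  intro a
  constructor
  · intro ha
    rcases mem_PF.1 ha with ⟨s, hs⟩
    rcases mem_guts_iff.1 hs with ⟨_, r, hr, hdr⟩
    have : r ∈ eval c (encode p) := evaln_sound hr
    rw [hc] at this
    simp only [Part.mem_bind_iff, Part.mem_map_iff] at this
    rcases this with ⟨q, hq, z, hz, rfl⟩
    have hqp : q = p := by simpa [Encodable.decode₂_encode] using hq
    subst hqp
    have : a = z := by
      rw [Encodable.decode₂_encode] at hdr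
      exact (Option.some.inj hdr).symm
    subst this; exact hz
  · intro ha
    have : a = y := Part.mem_unique ha hy
    subst this
    exact mem_PF.2 ⟨k, mem_guts_iff.2 ⟨hkept, encode a, hk, Encodable.decode₂_encode a⟩⟩

/-! ### prefix coding of the machine index -/

def parse : List Bool → Option (ℕ × List Bool)
  | [] => none
  | true :: l => some (0, l)
  | false :: l => (parse l).map fun x => (x.1 + 1, x.2)

lemma parse_repl (n : ℕ) (p : List Bool) :
    parse (List.replicate n false ++ true :: p) = some (n, p) := by
  induction n with
  | zero => simp [parse]
  | succ k ih => rw [List.replicate_succ]; simp [parse, ih]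

lemma parse_shape : ∀ (l : List Bool) (n : ℕ) (p : List Bool),
    parse l = some (n, p) → l = List.replicate n false ++ true :: p := by
  intro l
  induction l with
  | nil => intro n p h; simp [parse] at h
  | cons b l ih =>
    intro n p h
    cases b
    · simp only [parse, Option.map_eq_some_iff] at h
      rcases h with ⟨⟨m, q⟩, hmq, h2⟩
      have := ih m q hmq
      cases h2
      rw [this, List.replicate_succ]
      simp
    · simp only [parse] at h
      cases h
      simp

/-! ### the universal machine -/

def Uf : List Bool →. List Bool := fun l =>
  (Part.ofOption (parse l)).bind fun x => PF (Denumerable.ofNat Code x.1) x.2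

lemma Uf_eq (n : ℕ) (p : List Bool) :
    Uf (List.replicate n false ++ true :: p) = PF (Denumerable.ofNat Code n) p := by
  unfold Uf
  rw [parse_repl]
  apply Part.ext
  intro a
  simp [Part.mem_bind_iff]

lemma Uf_dom_prefixFree : PrefixFree Uf.Dom := by
  intro l₁ h₁ l₂ h₂ hpre
  have hdom : ∀ l, (Uf l).Dom → ∃ n p, parse l = some (n, p) ∧
      (PF (Denumerable.ofNat Code n) p).Dom := by
    intro l hl
    rcases Part.dom_iff_mem.1 hl with ⟨a, ha⟩
    unfold Uf at ha
    simp only [Part.mem_bind_iff, Part.mem_ofOption] at ha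
    rcases ha with ⟨⟨n, p⟩, hnp, ha⟩
    exact ⟨n, p, hnp, Part.dom_iff_mem.2 ⟨a, ha⟩⟩
  rcases hdom l₁ h₁ with ⟨n₁, p₁, hp₁, hd₁⟩
  rcases hdom l₂ h₂ with ⟨n₂, p₂, hp₂, hd₂⟩
  rw [parse_shape _ _ _ hp₁, parse_shape _ _ _ hp₂] at hpre ⊢
  -- peel off the replicate prefix
  have key : ∀ (n₁ : ℕ) (p₁ : List Bool) (n₂ : ℕ) (p₂ : List Bool),
      List.replicate n₁ false ++ true :: p₁ <+: List.replicate n₂ false ++ true :: p₂ →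
      n₁ = n₂ ∧ p₁ <+: p₂ := by
    intro m
    induction m with
    | zero =>
      intro q₁ n₂ q₂ h
      cases n₂ with
      | zero =>
        simp only [List.replicate, List.nil_append, List.cons_prefix_cons] at h
        exact ⟨rfl, h.2⟩
      | succ k =>
        rw [List.replicate_succ] at h
        simp [List.cons_prefix_cons] at h
    | succ k ih =>
      intro q₁ n₂ q₂ h
      cases n₂ with
      | zero =>
        rw [List.replicate_succ] at h
        simp [List.cons_prefix_cons] at h
      | succ m =>
        rw [List.replicate_succ, List.replicate_succ] at h
        simp only [List.cons_append, List.cons_prefix_cons] at h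
        rcases ih q₁ m q₂ h.2 with ⟨h1, h2⟩
        exact ⟨by omega, h2⟩
  rcases key n₁ p₁ n₂ p₂ hpre with ⟨rfl, hp⟩
  have : p₁ = p₂ := PF_dom_prefixFree _ p₁ hd₁ p₂ hd₂ hp
  rw [this]

/-! ### computability -/

open Primrec

private def stepT (s : List Bool × ℕ) (x : Bool) : List Bool × ℕ :=
  if s.2 = 0 then s else (s.1 ++ [x], s.2 - 1)

private lemma foldl_stepT : ∀ (l : List Bool) (acc : List Bool) (n : ℕ),
    l.foldl stepT (acc, n) = (acc ++ l.take n, n - l.length)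
  | [], acc, n => by simp
  | x :: l, acc, n => by
    cases n with
    | zero => simp [stepT, foldl_stepT l acc 0]
    | succ m =>
      simp only [List.foldl_cons, stepT, List.take_succ_cons, List.length_cons]
      rw [if_neg (by omega)]
      simp only [Nat.add_sub_cancel]
      rw [foldl_stepT l (acc ++ [x]) m]
      simp

lemma take_primrec : Primrec₂ fun (l : List Bool) (n : ℕ) => l.take n := by
  have hstepT : Primrec₂ fun (_ : List Bool × ℕ) (s : (List Bool × ℕ) × Bool) =>
      stepT s.1 s.2 := by
    unfold stepT
    exact Primrec.ite
      (Primrec.eq.comp (Primrec.snd.comp (Primrec.fst.comp Primrec.snd)) (Primrec.const 0))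
      (Primrec.fst.comp Primrec.snd)
      (((Primrec.list_append.comp (Primrec.fst.comp (Primrec.fst.comp Primrec.snd))
          (Primrec.list_cons.comp (Primrec.snd.comp Primrec.snd) (Primrec.const []))).pair
        (Primrec.pred.comp (Primrec.snd.comp (Primrec.fst.comp Primrec.snd)))))
  have h := Primrec.list_foldl (Primrec.fst (β := ℕ))
      ((Primrec.const ([] : List Bool)).pair Primrec.snd) hstepT
  have h2 := Primrec.fst.comp h
  refine h2.to₂.of_eq fun l n => ?_
  show (List.foldl (fun s b => stepT s b) ([], n) l).1 = _
  rw [show (fun (s : List Bool × ℕ) (b : Bool) => stepT s b) = stepT from rfl,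
    foldl_stepT]
  simp

lemma preB_primrec : Primrec₂ preB := by
  have : PrimrecRel fun (p q : List Bool) => p = q.take p.length :=
    Primrec.eq.comp Primrec.fst
      (take_primrec.comp Primrec.snd (Primrec.list_length.comp Primrec.fst))
  exact this.decide

lemma compB_primrec : Primrec₂ compB :=
  (Primrec.dom_bool₂ (· || ·)).comp₂ preB_primrec (preB_primrec.comp Primrec.snd Primrec.fst)

lemma ncomp_primrec : Primrec₂ ncomp := by
  unfold ncomp
  exact Primrec.option_getD.comp₂
    (Primrec.option_bind (Primrec.decode₂.comp Primrec.fst)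
      (Primrec.option_map (Primrec.decode₂.comp (Primrec.snd.comp Primrec.fst))
        (compB_primrec.comp (Primrec.snd.comp Primrec.fst) Primrec.snd).to₂).to₂).to₂
    (Primrec₂.const false)

lemma ok_primrec : Primrec₂ ok := by
  unfold ok
  have h1 : Primrec fun a : List ℕ × ℕ => (decode₂ (List Bool) a.2).isSome :=
    Primrec.option_isSome.comp (Primrec.decode₂.comp Primrec.snd)
  have h2 : Primrec fun a : List ℕ × ℕ =>
      a.1.foldl (fun b m => b && !(ncomp a.2 m)) true := by
    have := Primrec.list_foldl (Primrec.fst (α := List ℕ) (β := ℕ))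
      (Primrec.const true)
      (show Primrec₂ fun (a : List ℕ × ℕ) (s : Bool × ℕ) => s.1 && !(ncomp a.2 s.2) from
        (Primrec.dom_bool₂ (· && ·)).comp₂ (Primrec.fst.comp Primrec.snd)
          ((Primrec.dom_bool (!·)).comp
            (ncomp_primrec.comp (Primrec.snd.comp Primrec.fst)
              (Primrec.snd.comp Primrec.snd))).to₂)
    exact this
  exact ((Primrec.dom_bool₂ (· && ·)).comp h1 h2).to₂

lemma step_primrec : Primrec₂ step := by
  unfold step
  exact (Primrec.cond ok_primrec
    (Primrec.list_append.comp Primrec.fst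
      (Primrec.list_cons.comp Primrec.snd (Primrec.const [])))
    Primrec.fst).to₂

lemma kept_primrec : Primrec kept := by
  have := Primrec.list_foldl (Primrec.id (α := List ℕ)) (Primrec.const ([] : List ℕ))
    (show Primrec₂ fun (_ : List ℕ) (s : List ℕ × ℕ) => step s.1 s.2 from
      step_primrec.comp (Primrec.fst.comp Primrec.snd) (Primrec.snd.comp Primrec.snd))
  exact this

lemma newAt_primrec : Primrec₂ newAt := by
  unfold newAt
  exact (Primrec.list_flatMap (Primrec.list_range.comp (Primrec.succ.comp Primrec.snd))
    (show Primrec₂ fun (a : Code × ℕ) (n : ℕ) =>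
        cond ((evaln (a.2 + 1) a.1 n).isSome && !(evaln a.2 a.1 n).isSome) [n] [] from
      (Primrec.cond
        ((Primrec.dom_bool₂ (· && ·)).comp
          (Primrec.option_isSome.comp (primrec_evaln.comp
            (((Primrec.succ.comp (Primrec.snd.comp Primrec.fst)).pair
              (Primrec.fst.comp Primrec.fst)).pair Primrec.snd)))
          ((Primrec.dom_bool (!·)).comp (Primrec.option_isSome.comp (primrec_evaln.comp
            (((Primrec.snd.comp Primrec.fst).pair
              (Primrec.fst.comp Primrec.fst)).pair Primrec.snd)))))
        (Primrec.list_cons.comp Primrec.snd (Primrec.const []))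
        (Primrec.const [])).to₂)).to₂

lemma En_primrec : Primrec₂ En := by
  unfold En
  exact (Primrec.list_flatMap (Primrec.list_range.comp Primrec.snd)
    (newAt_primrec.comp (Primrec.fst.comp Primrec.fst) Primrec.snd).to₂).to₂

lemma keptSet_primrec : Primrec₂ keptSet := by
  unfold keptSet
  exact (kept_primrec.comp En_primrec).to₂

lemma foldl_or (n : ℕ) : ∀ (l : List ℕ) (b : Bool),
    l.foldl (fun b m => b || (m == n)) b = (b || l.any (fun m => m == n))
  | [], b => by simp
  | a :: l, b => by simp [foldl_or n l, Bool.or_assoc]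

lemma mem_primrec : PrimrecRel fun (n : ℕ) (l : List ℕ) => n ∈ l := by
  have h : Primrec fun a : ℕ × List ℕ =>
      a.2.foldl (fun b m => b || (m == a.1)) false := by
    have := Primrec.list_foldl (Primrec.snd (α := ℕ) (β := List ℕ))
      (Primrec.const false)
      (show Primrec₂ fun (a : ℕ × List ℕ) (s : Bool × ℕ) => s.1 || (s.2 == a.1) from
        (Primrec.dom_bool₂ (· || ·)).comp₂ (Primrec.fst.comp Primrec.snd)
          (Primrec.beq.comp (Primrec.snd.comp Primrec.snd)
            (Primrec.fst.comp Primrec.fst)).to₂)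
    exact this
  refine Primrec₂.primrecRel (h.to₂.of_eq fun n l => ?_)
  rw [foldl_or]
  simp only [Bool.false_or]
  refine Bool.eq_iff_iff.mpr ?_
  simp only [List.any_eq_true, beq_iff_eq, decide_eq_true_eq]
  exact ⟨fun ⟨m, hm, he⟩ => he ▸ hm, fun h => ⟨n, h, rfl⟩⟩

lemma guts_primrec : Primrec fun a : (Code × List Bool) × ℕ => guts a.1.1 a.1.2 a.2 := by
  unfold guts
  exact Primrec.cond
    (mem_primrec.comp (Primrec.encode.comp (Primrec.snd.comp Primrec.fst))
      (keptSet_primrec.comp (Primrec.fst.comp Primrec.fst) Primrec.snd)).decide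
    (Primrec.option_bind
      (primrec_evaln.comp ((Primrec.snd.pair (Primrec.fst.comp Primrec.fst)).pair
        (Primrec.encode.comp (Primrec.snd.comp Primrec.fst))))
      (Primrec.decode₂.comp Primrec.snd).to₂)
    (Primrec.const none)

lemma PF_partrec : Partrec fun a : ℕ × List Bool => PF (Denumerable.ofNat Code a.1) a.2 := by
  unfold PF
  apply Partrec.rfindOpt
  exact (guts_primrec.comp
    (((((Primrec.ofNat Code).comp (Primrec.fst.comp Primrec.fst)).pair
      (Primrec.snd.comp Primrec.fst)).pair Primrec.snd))).to_comp.to₂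

lemma parse_primrec : Primrec parse := by
  have h := Primrec.list_rec (Primrec.id (α := List Bool))
    (Primrec.const (none : Option (ℕ × List Bool)))
    (show Primrec₂ fun (_ : List Bool)
        (x : Bool × List Bool × Option (ℕ × List Bool)) =>
        cond x.1 (some (0, x.2.1)) (x.2.2.map fun y => (y.1 + 1, y.2)) from
      (Primrec.cond (Primrec.fst.comp Primrec.snd)
        (Primrec.option_some.comp ((Primrec.const 0).pair
          (Primrec.fst.comp (Primrec.snd.comp Primrec.snd))))
        (Primrec.option_map (Primrec.snd.comp (Primrec.snd.comp Primrec.snd))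
          ((Primrec.succ.comp (Primrec.fst.comp Primrec.snd)).pair
            (Primrec.snd.comp Primrec.snd)).to₂)).to₂)
  refine h.of_eq fun l => ?_
  induction l with
  | nil => rfl
  | cons b l ih =>
    cases b <;> simp [parse, ← ih]

lemma Uf_partrec : Partrec Uf := by
  unfold Uf
  exact (Computable.ofOption parse_primrec.to_comp).bind
    (PF_partrec.comp Computable.snd).to₂

/-! ### a trivial computer, for nonemptiness -/

def f₀ : List Bool →. List Bool := fun p =>
  Part.ofOption (if p = [] then some [] else none)

lemma f₀_partrec : Partrec f₀ :=
  Computable.ofOption (Primrec.ite (Primrec.eq.comp Primrec.id (Primrec.const []))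
    (Primrec.const (some [])) (Primrec.const none)).to_comp

lemma f₀_dom : ∀ p, (f₀ p).Dom ↔ p = [] := by
  intro p
  by_cases h : p = [] <;> simp [f₀, h]

lemma f₀_dom_prefixFree : PrefixFree f₀.Dom := by
  intro p hp q hq _
  rw [PFun.mem_dom] at hp hq
  have h1 : (f₀ p).Dom := Part.dom_iff_mem.2 (by simpa using hp)
  have h2 : (f₀ q).Dom := Part.dom_iff_mem.2 (by simpa using hq)
  rw [f₀_dom] at h1 h2
  rw [h1, h2]

lemma Uf_dom_nonempty : Uf.Dom.Nonempty := by
  obtain ⟨c, hc⟩ := exists_good_code f₀_partrec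
  have hdom : [] ∈ f₀.Dom := by
    rw [PFun.mem_dom]
    exact ⟨[], by simp [f₀]⟩
  have h := PF_eq f₀_dom_prefixFree hc [] hdom
  refine ⟨List.replicate (encode c) false ++ true :: [], ?_⟩
  show (Uf _).Dom
  rw [Uf_eq, Denumerable.ofNat_encode, h]
  simp [f₀]

end OptComp


/-- There exists an optimal computer. -/
theorem exists_optimal_computer : ∃ U : Computer, Optimal U := by
  refine ⟨⟨OptComp.Uf, OptComp.Uf_partrec, OptComp.Uf_dom_nonempty,
    OptComp.Uf_dom_prefixFree⟩, ?_⟩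
  intro C
  obtain ⟨c, hc⟩ := OptComp.exists_good_code C.partrec
  refine ⟨Encodable.encode c + 1, fun p hp => ?_⟩
  refine ⟨List.replicate (Encodable.encode c) false ++ true :: p, ?_, ?_⟩
  · show OptComp.Uf _ = _
    rw [OptComp.Uf_eq, Denumerable.ofNat_encode]
    exact OptComp.PF_eq C.dom_prefixFree hc p hp
  · simp only [List.length_append, List.length_replicate, List.length_cons]
    omega
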